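/- Let T be a dual large semistandard decomposition tableau (for q(n)). Then there is a unique dual marginally large tableau T_M obtainable from T by successively pushing out trivial columns, i.e., the rewriting process of removing trivial columns is confluent and terminates at a unique normal form. -/
import Mathlib

/-- A hook word: weakly decreasing then strictly increasing. -/
def IsHookWord (w : List ℕ) : Prop :=
  ∃ a b : List ℕ, w = a ++ b ∧ a ≠ [] ∧
    List.Chain' (fun x y => y ≤ x) a ∧ List.Chain' (· < ·) (a.getLast! :: b)

/-- The number of leading entries equal to `i` in a row. -/
def leadCount (i : ℕ) (l : List ℕ) : ℕ := (l.takeWhile (fun x => x == i)).length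

/-- Dual large: `n` rows (top to bottom, row `k` from the top holding the letter
`n - k` in its leading run) and each leading run strictly longer than the next row. -/
def DualLarge (n : ℕ) (T : List (List ℕ)) : Prop :=
  T.length = n ∧ ∀ i, 1 ≤ i → i ≤ n →
    (T.getD (n - i + 1) []).length < leadCount i (T.getD (n - i) [])

/-- Dual marginally large: each excess is exactly one. -/
def DualMarginallyLarge (n : ℕ) (T : List (List ℕ)) : Prop :=
  T.length = n ∧ ∀ i, 1 ≤ i → i ≤ n →
    leadCount i (T.getD (n - i) []) = (T.getD (n - i + 1) []).length + 1

/-- Pushing out a trivial column of height `h`: for each row `k < h`, remove one box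
containing the letter `n - k` from the leading run of row `k`. -/
def PushStep (n : ℕ) (T T' : List (List ℕ)) : Prop :=
  ∃ h, 1 ≤ h ∧ h ≤ n ∧ (∀ k, k < h → (T.getD k []).headD 0 = n - k) ∧
    T' = (List.range T.length).map
      (fun k => if k < h then (T.getD k []).tail else T.getD k [])

namespace S13

lemma cons_of_leadCount_pos {i : ℕ} {l : List ℕ} (h : 0 < leadCount i l) :
    l = i :: l.tail := by
  cases l with
  | nil => simp [leadCount] at h
  | cons a t =>
    simp only [leadCount, List.takeWhile_cons] at h
    by_cases hai : a = i
    · simp [hai]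
    · simp [hai] at h

lemma leadCount_cons (i : ℕ) (t : List ℕ) : leadCount i (i :: t) = leadCount i t + 1 := by
  simp [leadCount, List.takeWhile_cons]

lemma dropWhile_cons_self (i : ℕ) (t : List ℕ) :
    (i :: t).dropWhile (fun x => x == i) = t.dropWhile (fun x => x == i) := by
  simp [List.dropWhile_cons]

lemma decomp (i : ℕ) (l : List ℕ) :
    l = List.replicate (leadCount i l) i ++ l.dropWhile (fun x => x == i) := by
  have h1 : l.takeWhile (fun x => x == i) = List.replicate (leadCount i l) i := by
    apply List.eq_replicate_of_mem
    intro b hb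
    have := List.mem_takeWhile_imp hb
    simpa using this
  conv_lhs => rw [← List.takeWhile_append_dropWhile (p := fun x => x == i) (l := l)]
  rw [h1]

lemma getD_map_range (f : ℕ → List ℕ) (m k : ℕ) :
    (((List.range m).map f).getD k []) = if k < m then f k else [] := by
  by_cases h : k < m
  · rw [List.getD_eq_getElem _ _ (by simpa using h)]
    simp [h]
  · rw [List.getD_eq_default _ _ (by simpa using Nat.le_of_not_lt h)]
    simp [h]

lemma sum_map_range (f : ℕ → ℕ) (n : ℕ) :
    ((List.range n).map f).sum = ∑ k ∈ Finset.range n, f k := by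
  simp [Finset.sum_range, Finset.range]
  rfl

lemma push_inv {n : ℕ} {A B : List (List ℕ)} (hA : A.length = n) (hp : PushStep n A B) :
    B.length = n ∧ ∀ k, (B.getD k []).dropWhile (fun x => x == (n - k)) =
      (A.getD k []).dropWhile (fun x => x == (n - k)) := by
  obtain ⟨h, h1, hhn, hhead, rfl⟩ := hp
  have hB : ∀ k, (((List.range A.length).map
      (fun k => if k < h then (A.getD k []).tail else A.getD k [])).getD k [])
      = if k < n then (if k < h then (A.getD k []).tail else A.getD k []) else [] := by
    intro k
    rw [hA, getD_map_range]
  constructor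
  · simp [hA]
  · intro k
    by_cases hkn : k < n
    · by_cases hkh : k < h
      · have hh := hhead k hkh
        have hne : A.getD k [] = (n - k) :: (A.getD k []).tail := by
          cases hrow : A.getD k [] with
          | nil => rw [hrow] at hh; simp at hh; omega
          | cons a t => rw [hrow] at hh; simp at hh; simp [hh]
        rw [hB, if_pos hkn, if_pos hkh]
        conv_rhs => rw [hne]
        rw [dropWhile_cons_self]
      · rw [hB, if_pos hkn, if_neg hkh]
    · rw [hB, if_neg hkn, List.getD_eq_default _ _ (by omega)]

lemma reach_inv {n : ℕ} {T X : List (List ℕ)} (hT : T.length = n)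
    (hr : Relation.ReflTransGen (PushStep n) T X) :
    X.length = n ∧ ∀ k, (X.getD k []).dropWhile (fun x => x == (n - k)) =
      (T.getD k []).dropWhile (fun x => x == (n - k)) := by
  induction hr with
  | refl => exact ⟨hT, fun _ => rfl⟩
  | tail _ h2 ih =>
    obtain ⟨hlen, hdrop⟩ := ih
    obtain ⟨hlen', hdrop'⟩ := push_inv hlen h2
    exact ⟨hlen', fun k => (hdrop' k).trans (hdrop k)⟩

lemma ml_unique {n : ℕ} {X Y : List (List ℕ)} (hX : DualMarginallyLarge n X)
    (hY : DualMarginallyLarge n Y)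
    (ht : ∀ k, (X.getD k []).dropWhile (fun x => x == (n - k)) =
      (Y.getD k []).dropWhile (fun x => x == (n - k))) : X = Y := by
  have key : ∀ j, X.getD (n - j) [] = Y.getD (n - j) [] := by
    intro j
    induction j with
    | zero =>
      rw [List.getD_eq_default _ _ (by have := hX.1; omega), List.getD_eq_default _ _ (by have := hY.1; omega)]
    | succ j ihj =>
      by_cases hjn : j + 1 ≤ n
      · have hi := hX.2 (j+1) (by omega) hjn
        have hi' := hY.2 (j+1) (by omega) hjn
        have hidx : n - (j+1) + 1 = n - j := by omega
        rw [hidx] at hi hi'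
        have hc : leadCount (j+1) (X.getD (n-(j+1)) []) =
            leadCount (j+1) (Y.getD (n-(j+1)) []) := by rw [hi, hi', ihj]
        have hl : n - (n - (j+1)) = j + 1 := by omega
        have htk := ht (n - (j+1))
        rw [hl] at htk
        conv_lhs => rw [decomp (j+1) (X.getD (n-(j+1)) [])]
        conv_rhs => rw [decomp (j+1) (Y.getD (n-(j+1)) [])]
        rw [hc, htk]
      · have h0 : n - (j+1) = n - j := by omega
        rw [h0]; exact ihj
  apply List.ext_getElem (by rw [hX.1, hY.1])
  intro k h1 h2
  have hkn : k < n := by rw [hX.1] at h1; exact h1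
  have hkey := key (n - k)
  rw [show n - (n - k) = k by omega] at hkey
  rw [← List.getD_eq_getElem X [] h1, ← List.getD_eq_getElem Y [] h2]
  exact hkey


lemma exists_ml (n : ℕ) : ∀ m T, ((List.range n).map (fun k => (T.getD k []).length)).sum = m →
    DualLarge n T →
    ∃ TM, DualMarginallyLarge n TM ∧ Relation.ReflTransGen (PushStep n) T TM := by
  intro m
  induction m using Nat.strong_induction_on with
  | _ m IH =>
    intro T hm hL
    by_cases hml : ∀ i, 1 ≤ i → i ≤ n →
        leadCount i (T.getD (n - i) []) = (T.getD (n - i + 1) []).length + 1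
    · exact ⟨T, ⟨hL.1, hml⟩, .refl⟩
    · push_neg at hml
      obtain ⟨i, hi1, hin, hne⟩ := hml
      have hbig : (T.getD (n - i + 1) []).length + 2 ≤ leadCount i (T.getD (n - i) []) := by
        have := hL.2 i hi1 hin; omega
      set h : ℕ := n - i + 1 with hh
      have hhn : h ≤ n := by omega
      have hpos : ∀ j, 1 ≤ j → j ≤ n → T.getD (n - j) [] = j :: (T.getD (n - j) []).tail := by
        intro j hj1 hjn
        exact cons_of_leadCount_pos (by have := hL.2 j hj1 hjn; omega)
      have hhead : ∀ k, k < h → T.getD k [] = (n - k) :: (T.getD k []).tail := by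
        intro k hk
        have hkn : k < n := by omega
        have := hpos (n - k) (by omega) (by omega)
        rwa [show n - (n - k) = k by omega] at this
      set T' : List (List ℕ) := (List.range T.length).map
        (fun k => if k < h then (T.getD k []).tail else T.getD k []) with hT'
      have hstep : PushStep n T T' := by
        refine ⟨h, by omega, hhn, ?_, rfl⟩
        intro k hk
        rw [hhead k hk]
        simp
      have hT'row : ∀ k, T'.getD k [] =
          if k < n then (if k < h then (T.getD k []).tail else T.getD k []) else [] := by
        intro k
        rw [hT', hL.1, getD_map_range]
      have hT'len : T'.length = n := by rw [hT']; simp [hL.1]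
      -- new tableau is dual large
      have hL' : DualLarge n T' := by
        refine ⟨hT'len, ?_⟩
        intro j hj1 hjn
        have hDL := hL.2 j hj1 hjn
        have hga := hT'row (n - j)
        have hgb := hT'row (n - j + 1)
        rw [if_pos (show n - j < n by omega)] at hga
        -- length of the (possibly out-of-range) next row is unchanged unless it shrinks
        by_cases hah : n - j < h
        · have hja := hpos j hj1 hjn
          have hlc : leadCount j (T.getD (n - j) []) =
              leadCount j ((T.getD (n - j) []).tail) + 1 := by
            conv_lhs => rw [hja]
            exact leadCount_cons _ _
          rw [hga, if_pos hah]
          by_cases hbh : n - j + 1 < h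
          · -- next row also loses its head
            have hj2 : 2 ≤ j := by omega
            have hble : T.getD (n - j + 1) [] = (j - 1) :: (T.getD (n - j + 1) []).tail := by
              have e : n - (j - 1) = n - j + 1 := by omega
              have := hpos (j - 1) (by omega) (by omega)
              rwa [e] at this
            have hlenb : (T.getD (n - j + 1) []).length =
                (T.getD (n - j + 1) []).tail.length + 1 := by
              conv_lhs => rw [hble]
              simp
            rw [hgb, if_pos (show n - j + 1 < n by omega), if_pos hbh]
            omega
          · -- j = i : the chosen row, excess at least 2
            have hij : j = i := by omega
            subst hij
            have hlenb : (T'.getD (n - j + 1) []).length = (T.getD (n - j + 1) []).length := by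
              rw [hgb]
              by_cases hbn : n - j + 1 < n
              · rw [if_pos hbn, if_neg hbh]
              · rw [if_neg hbn, List.getD_eq_default _ _ (by have := hL.1; omega)]
            rw [hlenb]
            rw [hh] at hbig
            omega
        · -- rows untouched
          have hbh : ¬ (n - j + 1 < h) := by omega
          rw [hga, if_neg hah]
          have hlenb : (T'.getD (n - j + 1) []).length = (T.getD (n - j + 1) []).length := by
            rw [hgb]
            by_cases hbn : n - j + 1 < n
            · rw [if_pos hbn, if_neg hbh]
            · rw [if_neg hbn, List.getD_eq_default _ _ (by have := hL.1; omega)]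
          rw [hlenb]
          exact hDL
      -- the measure strictly decreases
      have hlt : ((List.range n).map (fun k => (T'.getD k []).length)).sum < m := by
        rw [← hm, sum_map_range, sum_map_range]
        apply Finset.sum_lt_sum
        · intro k hk
          rw [hT'row k, if_pos (Finset.mem_range.mp hk)]
          by_cases hkh : k < h
          · rw [if_pos hkh]
            exact (T.getD k []).length_tail ▸ Nat.sub_le _ _
          · rw [if_neg hkh]
        · refine ⟨0, Finset.mem_range.mpr (by omega), ?_⟩
          rw [hT'row 0, if_pos (show (0:ℕ) < n by omega), if_pos (show (0:ℕ) < h by omega)]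
          have h0 := hhead 0 (by omega)
          conv_rhs => rw [h0]
          simp
      obtain ⟨TM, hTM, hreach⟩ := IH _ hlt T' rfl hL'
      exact ⟨TM, hTM, .head hstep hreach⟩

end S13

/-- From any dual large semistandard decomposition tableau, pushing out trivial
columns terminates at a unique dual marginally large tableau (the rewriting system
is confluent with a unique normal form). -/
theorem stmt_13 (n : ℕ) (T : List (List ℕ)) (hL : DualLarge n T)
    (hhook : ∀ r ∈ T, IsHookWord r) :
    ∃! TM : List (List ℕ),
      DualMarginallyLarge n TM ∧ Relation.ReflTransGen (PushStep n) T TM := by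
  obtain ⟨TM, hTM, hreach⟩ := S13.exists_ml n _ T rfl hL
  refine ⟨TM, ⟨hTM, hreach⟩, ?_⟩
  rintro Y ⟨hYml, hYreach⟩
  have h1 := S13.reach_inv hL.1 hreach
  have h2 := S13.reach_inv hL.1 hYreach
  exact S13.ml_unique hYml hTM (fun k => (h2.2 k).trans (h1.2 k).symm)
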